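/- Let G = (V,E) be a finite simple connected graph and C ⊆ V, and set x = χ^C. Then C is a connected vertex cover of G if and only if x_u + x_v ≥ 1 for every edge uv ∈ E and there exists a vector y : E → ℝ lying in the convex hull (in ℝ^E) of the incidence vectors of the forests of G, such that y(E) = x(V) − 1 and y_uv ≤ x_u and y_uv ≤ x_v for every edge uv ∈ E. -/

import Mathlib

open SimpleGraph Finset

namespace CVCAux

variable {V W : Type*}

/-! ### Generic graph-theoretic toolkit -/

lemma pullback_walk (f : W ↪ V) (K : SimpleGraph W) :
    ∀ {s t : V} (p : (K.map f).Walk s t) (a b : W) (ha : f a = s) (hb : f b = t),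
      ∃ q : K.Walk a b,
        (q.map (SimpleGraph.Embedding.map f K).toHom).copy ha hb = p := by
  intro s t p
  induction p with
  | nil =>
    intro a b ha hb
    subst ha
    have hab : b = a := f.injective hb
    subst hab
    exact ⟨SimpleGraph.Walk.nil, by simp⟩
  | @cons s c t h p ih =>
    intro a b ha hb
    subst ha; subst hb
    obtain ⟨u, v, huv, hu, hv⟩ := (SimpleGraph.map_adj f K _ _).1 h
    have hua : u = a := f.injective hu
    subst hua
    subst hv
    obtain ⟨q, hq⟩ := ih v b rfl rfl
    refine ⟨SimpleGraph.Walk.cons huv q, ?_⟩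
    subst hq
    rfl

lemma IsAcyclic.map_embedding (f : W ↪ V) {K : SimpleGraph W} (hK : K.IsAcyclic) :
    (K.map f).IsAcyclic := by
  intro s p hp
  cases p with
  | nil => exact absurd hp (SimpleGraph.Walk.IsCycle.not_of_nil)
  | @cons s c t h p' =>
    obtain ⟨u, v, huv, hu, hv⟩ := (SimpleGraph.map_adj f K _ _).1 h
    subst hu
    obtain ⟨q, hq⟩ := pullback_walk f K (SimpleGraph.Walk.cons h p') u u rfl rfl
    replace hq : q.map (SimpleGraph.Embedding.map f K).toHom = SimpleGraph.Walk.cons h p' := hq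
    rw [← hq] at hp
    exact hK q ((SimpleGraph.Walk.map_isCycle_iff_of_injective
      (by exact f.injective)).1 hp)

lemma exists_cross_edge {H K : SimpleGraph W} :
    ∀ {u v : W}, H.Walk u v → ¬K.Reachable u v →
      ∃ a b, H.Adj a b ∧ ¬K.Reachable a b := by
  intro u v p
  induction p with
  | nil => intro h; exact absurd (Reachable.refl _) h
  | @cons u w v h p ih =>
    intro hr
    by_cases hK : K.Reachable w v
    · by_cases hK' : K.Reachable u w
      · exact absurd (hK'.trans hK) hr
      · exact ⟨u, w, h, hK'⟩
    · exact ih hK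

lemma isAcyclic_sup_edge {K : SimpleGraph W} (hK : K.IsAcyclic) {a b : W}
    (hne : a ≠ b) (hr : ¬K.Reachable a b) : (K ⊔ edge a b).IsAcyclic := by
  have hadjab : (K ⊔ edge a b).Adj a b := by
    rw [sup_adj, edge_adj]
    exact Or.inr ⟨Or.inl ⟨rfl, rfl⟩, hne⟩
  have hbridge : (K ⊔ edge a b).IsBridge s(a, b) := by
    rw [SimpleGraph.isBridge_iff]
    · intro hreach
      apply hr
      refine hreach.mono ?_
      intro x y hxy
      rw [deleteEdges_adj, sup_adj] at hxy
      obtain ⟨hor, hnot⟩ := hxy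
      rcases hor with h | h
      · exact h
      · exact absurd (by rw [edge, fromEdgeSet_adj] at h; exact h.1) hnot
  intro v c hc
  by_cases hmem : s(a, b) ∈ c.edges
  · exact (isBridge_iff_forall_cycle_notMem hadjab).1 hbridge c hc hmem
  · have hsub : ∀ e ∈ c.edges, e ∈ K.edgeSet := by
      intro e he
      have := c.edges_subset_edgeSet he
      rw [edgeSet_sup] at this
      rcases this with h | h
      · exact h
      · exfalso
        rw [edge, edgeSet_fromEdgeSet] at h
        obtain ⟨h1, _⟩ := h
        rw [Set.mem_singleton_iff] at h1
        exact hmem (h1 ▸ he)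
    exact hK _ (hc.transfer hsub)

lemma ncard_edgeSet_eq {G : SimpleGraph W} [Fintype G.edgeSet] :
    G.edgeSet.ncard = #G.edgeFinset := by
  rw [← coe_edgeFinset, Set.ncard_coe_finset]

lemma ncard_edgeSet_sup_edge [Fintype W] (K : SimpleGraph W) {a b : W}
    (hKadj : ¬K.Adj a b) (hne : a ≠ b) :
    (K ⊔ edge a b).edgeSet.ncard = K.edgeSet.ncard + 1 := by
  classical
  have h := K.card_edgeFinset_sup_edge hKadj hne
  rw [← ncard_edgeSet_eq, ← ncard_edgeSet_eq] at h
  exact h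

lemma ncard_edgeSet_tree [Fintype W] {T : SimpleGraph W} (hT : T.IsTree) :
    T.edgeSet.ncard + 1 = Fintype.card W := by
  classical
  have h := hT.card_edgeFinset
  rw [← ncard_edgeSet_eq] at h
  exact h

lemma exists_tree_between [Fintype W] (H : SimpleGraph W) (hH : H.Connected) :
    ∀ (K : SimpleGraph W), K ≤ H → K.IsAcyclic →
      ∃ T, K ≤ T ∧ T ≤ H ∧ T.IsTree := by
  classical
  have key : ∀ (m : ℕ) (K : SimpleGraph W),
      H.edgeSet.ncard - K.edgeSet.ncard ≤ m → K ≤ H → K.IsAcyclic →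
      ∃ T, K ≤ T ∧ T ≤ H ∧ T.IsTree := by
    intro m
    induction m with
    | zero =>
      intro K hm hKH hKa
      by_cases hc : K.Connected
      · exact ⟨K, le_refl _, hKH, ⟨hc, hKa⟩⟩
      · exfalso
        have hne : Nonempty W := hH.nonempty
        have hpc : ∃ u v, ¬K.Reachable u v := by
          by_contra hcon
          push_neg at hcon
          exact hc (SimpleGraph.Connected.mk (fun u v => hcon u v))
        obtain ⟨u, v, huv⟩ := hpc
        obtain ⟨a, b, hab, habr⟩ :=
          exists_cross_edge ((hH.preconnected u v).some) huv
        have hKadj : ¬K.Adj a b := fun h => habr h.reachable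
        have hedge : (K ⊔ edge a b) ≤ H := by
          refine sup_le hKH ?_
          intro x y hxy
          rw [edge_adj] at hxy
          rcases hxy.1 with ⟨rfl, rfl⟩ | ⟨rfl, rfl⟩
          · exact hab
          · exact hab.symm
        have hcard := ncard_edgeSet_sup_edge K hKadj hab.ne
        have h1 : (K ⊔ edge a b).edgeSet.ncard ≤ H.edgeSet.ncard :=
          Set.ncard_le_ncard (edgeSet_mono hedge) (Set.toFinite _)
        omega
    | succ m ih =>
      intro K hm hKH hKa
      by_cases hc : K.Connected
      · exact ⟨K, le_refl _, hKH, ⟨hc, hKa⟩⟩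
      · have hne : Nonempty W := hH.nonempty
        have hpc : ∃ u v, ¬K.Reachable u v := by
          by_contra hcon
          push_neg at hcon
          exact hc (SimpleGraph.Connected.mk (fun u v => hcon u v))
        obtain ⟨u, v, huv⟩ := hpc
        obtain ⟨a, b, hab, habr⟩ :=
          exists_cross_edge ((hH.preconnected u v).some) huv
        have hKadj : ¬K.Adj a b := fun h => habr h.reachable
        have hedge : (K ⊔ edge a b) ≤ H := by
          refine sup_le hKH ?_
          intro x y hxy
          rw [edge_adj] at hxy
          rcases hxy.1 with ⟨rfl, rfl⟩ | ⟨rfl, rfl⟩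
          · exact hab
          · exact hab.symm
        have hcard := ncard_edgeSet_sup_edge K hKadj hab.ne
        have h1 : (K ⊔ edge a b).edgeSet.ncard ≤ H.edgeSet.ncard :=
          Set.ncard_le_ncard (edgeSet_mono hedge) (Set.toFinite _)
        obtain ⟨T, h2, h3, h4⟩ := ih (K ⊔ edge a b) (by omega) hedge
          (isAcyclic_sup_edge hKa hab.ne habr)
        exact ⟨T, le_trans le_sup_left h2, h3, h4⟩
  intro K hKH hKa
  exact key _ K le_rfl hKH hKa

lemma acyclic_ncard_le [Fintype W] [Nonempty W] {K : SimpleGraph W}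
    (hK : K.IsAcyclic) : K.edgeSet.ncard + 1 ≤ Fintype.card W := by
  obtain ⟨T, hKT, -, hT⟩ := exists_tree_between ⊤ connected_top K le_top hK
  have h1 := ncard_edgeSet_tree hT
  have h2 : K.edgeSet.ncard ≤ T.edgeSet.ncard :=
    Set.ncard_le_ncard (edgeSet_mono hKT) (Set.toFinite _)
  omega

lemma acyclic_connected_of_ncard [Fintype W] [Nonempty W] {K : SimpleGraph W}
    (hK : K.IsAcyclic) (hcard : K.edgeSet.ncard + 1 = Fintype.card W) :
    K.Connected := by
  obtain ⟨T, hKT, -, hT⟩ := exists_tree_between ⊤ connected_top K le_top hK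
  have h1 := ncard_edgeSet_tree hT
  have h3 : K.edgeSet = T.edgeSet :=
    Set.eq_of_subset_of_ncard_le (edgeSet_mono hKT) (by omega) (Set.toFinite _)
  have : K = T := edgeSet_inj.1 h3
  rw [this]
  exact hT.isConnected

/-! ### Subtype correspondence -/

lemma edgeSet_map' (f : W ↪ V) (K : SimpleGraph W) :
    (K.map f).edgeSet = Sym2.map f '' K.edgeSet := by
  ext e
  induction e using Sym2.ind with
  | _ x y =>
    simp only [mem_edgeSet, SimpleGraph.map_adj, Set.mem_image]
    constructor
    · rintro ⟨a, b, hab, rfl, rfl⟩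
      exact ⟨s(a, b), hab, Sym2.map_pair_eq f a b⟩
    · rintro ⟨e', he', hmap⟩
      induction e' using Sym2.ind with
      | _ a b =>
        rw [Sym2.map_pair_eq, Sym2.eq_iff] at hmap
        rw [mem_edgeSet] at he'
        rcases hmap with ⟨rfl, rfl⟩ | ⟨rfl, rfl⟩
        · exact ⟨a, b, he', rfl, rfl⟩
        · exact ⟨b, a, he'.symm, rfl, rfl⟩

lemma ncard_edgeSet_map (f : W ↪ V) (K : SimpleGraph W) :
    (K.map f).edgeSet.ncard = K.edgeSet.ncard := by
  rw [edgeSet_map', Set.ncard_image_of_injective _ (Sym2.map.injective f.injective)]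

lemma map_comap_fromEdgeSet {C : Set V} {F : Finset (Sym2 V)}
    (hFC : ∀ e ∈ F, ∀ v ∈ e, v ∈ C) :
    (SimpleGraph.comap (fun a : C => (a : V)) (fromEdgeSet ↑F)).map
      (Function.Embedding.subtype (· ∈ C)) = fromEdgeSet ↑F := by
  ext x y
  simp only [SimpleGraph.map_adj, comap_adj, Function.Embedding.coe_subtype]
  constructor
  · rintro ⟨-, a, b, hab, rfl, rfl⟩
    exact hab
  · intro h
    have h' := h
    rw [fromEdgeSet_adj] at h'
    have hx : x ∈ C := hFC _ h'.1 x (Sym2.mem_mk_left x y)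
    have hy : y ∈ C := hFC _ h'.1 y (Sym2.mem_mk_right x y)
    exact ⟨h.ne, ⟨x, hx⟩, ⟨y, hy⟩, h, rfl, rfl⟩

lemma acyclic_comap {C : Set V} {F : Finset (Sym2 V)}
    (hacyc : (fromEdgeSet (F : Set (Sym2 V))).IsAcyclic) :
    (SimpleGraph.comap (fun a : C => (a : V)) (fromEdgeSet ↑F)).IsAcyclic := by
  intro v c hc
  let φ : (SimpleGraph.comap (fun a : C => (a : V)) (fromEdgeSet ↑F)) →g
      fromEdgeSet (F : Set (Sym2 V)) :=
    ⟨fun a => (a : V), fun {a b} h => h⟩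
  exact hacyc (c.map φ) (hc.map (by exact Subtype.val_injective))

lemma ncard_comap_eq {G : SimpleGraph V} {C : Set V} {F : Finset (Sym2 V)}
    (hFE : (F : Set (Sym2 V)) ⊆ G.edgeSet)
    (hFC : ∀ e ∈ F, ∀ v ∈ e, v ∈ C) :
    (SimpleGraph.comap (fun a : C => (a : V)) (fromEdgeSet ↑F)).edgeSet.ncard
      = #F := by
  have h2 := ncard_edgeSet_map (Function.Embedding.subtype (· ∈ C))
    (SimpleGraph.comap (fun a : C => (a : V)) (fromEdgeSet ↑F))
  rw [map_comap_fromEdgeSet hFC, edgeSet_fromEdgeSet] at h2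
  have hdiag : ((F : Set (Sym2 V)) \ Sym2.diagSet) = ↑F := by
    ext e
    constructor
    · exact fun h => h.1
    · exact fun h => ⟨h, G.not_isDiag_of_mem_edgeSet (hFE h)⟩
  rw [hdiag, Set.ncard_coe_finset] at h2
  exact h2.symm

end CVCAux

open CVCAux

theorem stmt_2 {V : Type*} [Fintype V] [DecidableEq V]
    (G : SimpleGraph V) [DecidableRel G.Adj] (hG : G.Connected)
    (C : Set V) [DecidablePred (· ∈ C)]
    (x : V → ℝ) (hx : x = fun v => if v ∈ C then 1 else 0) :
    ((∀ u v : V, G.Adj u v → u ∈ C ∨ v ∈ C) ∧ (G.induce C).Connected) ↔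
    ((∀ u v : V, G.Adj u v → x u + x v ≥ 1) ∧
      ∃ y ∈ convexHull ℝ {z : Sym2 V → ℝ | ∃ F : Finset (Sym2 V),
          (F : Set (Sym2 V)) ⊆ G.edgeSet ∧
          (SimpleGraph.fromEdgeSet (F : Set (Sym2 V))).IsAcyclic ∧
          z = fun e => if e ∈ F then 1 else 0},
        (∑ e ∈ G.edgeFinset, y e = ∑ v, x v - 1) ∧
        (∀ u v : V, G.Adj u v → y s(u, v) ≤ x u ∧ y s(u, v) ≤ x v)) := by
  subst hx
  classical
  have hsumx : ∑ v, (fun v => if v ∈ C then (1 : ℝ) else 0) v = C.toFinset.card := by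
    simp only [Finset.sum_boole, Nat.cast_inj]
    congr 1
    ext v
    simp [Set.mem_toFinset]
  constructor
  · rintro ⟨hvc, hconn⟩
    haveI : Nonempty ↥C := hconn.nonempty
    constructor
    · intro u v huv
      rcases hvc u v huv with h | h <;> simp only [h, if_true] <;> split <;> norm_num
    · -- build the spanning tree of `G.induce C`
      obtain ⟨T, -, hTle, hT⟩ := exists_tree_between (G.induce C) hconn ⊥ bot_le
        (by simp)
      set f : ↥C ↪ V := Function.Embedding.subtype (· ∈ C) with hf
      have hTmap_le : T.map f ≤ G := by
        refine le_trans (map_monotone f hTle) ?_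
        exact map_comap_le f G
      set F : Finset (Sym2 V) := ((T.map f).edgeSet.toFinite).toFinset with hF
      have hFcoe : (F : Set (Sym2 V)) = (T.map f).edgeSet := Set.Finite.coe_toFinset _
      have hFE : (F : Set (Sym2 V)) ⊆ G.edgeSet := by
        rw [hFcoe]; exact edgeSet_mono hTmap_le
      have hacyc : (fromEdgeSet (F : Set (Sym2 V))).IsAcyclic := by
        rw [hFcoe, fromEdgeSet_edgeSet]
        exact IsAcyclic.map_embedding f hT.IsAcyclic
      refine ⟨fun e => if e ∈ F then 1 else 0,
        subset_convexHull ℝ _ ⟨F, hFE, hacyc, rfl⟩, ?_, ?_⟩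
      · -- sum equality
        have hcount : #F + 1 = C.toFinset.card := by
          have h1 : (F : Set (Sym2 V)).ncard = #F := Set.ncard_coe_finset F
          rw [hFcoe, ncard_edgeSet_map] at h1
          have h2 := ncard_edgeSet_tree hT
          rw [h1] at h2
          rw [h2, Set.toFinset_card]
        have hFsubE : F ⊆ G.edgeFinset := by
          intro e he
          rw [mem_edgeFinset]
          exact hFE he
        have hsum : ∑ e ∈ G.edgeFinset, (if e ∈ F then (1:ℝ) else 0) = #F := by
          rw [Finset.sum_boole, Finset.filter_mem_eq_inter,
            Finset.inter_eq_right.2 hFsubE]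
        rw [hsum, hsumx]
        have hc' : ((#F : ℝ) + 1) = (C.toFinset.card : ℝ) := by
          exact_mod_cast hcount
        linarith
      · -- bounds
        have hzero : ∀ u : V, u ∉ C → ∀ e ∈ F, u ∉ e := by
          intro u hu e he hue
          have : e ∈ (T.map f).edgeSet := by rw [← hFcoe]; exact_mod_cast he
          obtain ⟨v', rfl⟩ := Sym2.mem_iff_exists.1 hue
          rw [mem_edgeSet] at this
          obtain ⟨a, b, -, ha, -⟩ := (SimpleGraph.map_adj f T _ _).1 this
          exact hu (ha ▸ a.2)
        intro u v huv
        constructor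
        · by_cases hu : u ∈ C
          · simp only [hu, if_true]
            split <;> norm_num
          · simp only [hu, if_false]
            rw [if_neg]
            intro hmem
            exact hzero u hu _ hmem (Sym2.mem_mk_left u v)
        · by_cases hv : v ∈ C
          · simp only [hv, if_true]
            split <;> norm_num
          · simp only [hv, if_false]
            rw [if_neg]
            intro hmem
            exact hzero v hv _ hmem (Sym2.mem_mk_right u v)
  · rintro ⟨h1, y, hy_hull, hy_sum, hy_le⟩
    have hvc : ∀ u v : V, G.Adj u v → u ∈ C ∨ v ∈ C := by
      intro u v huv
      by_contra hcon
      push_neg at hcon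
      have := h1 u v huv
      simp only [hcon.1, hcon.2, if_false] at this
      norm_num at this
    refine ⟨hvc, ?_⟩
    -- decompose the convex hull membership
    rw [_root_.convexHull_eq] at hy_hull
    obtain ⟨ι, t, w, z, hw0, hw1, hz, hyc⟩ := hy_hull
    rw [Finset.centerMass_eq_of_sum_1 _ _ hw1] at hyc
    have hye : ∀ e, y e = ∑ i ∈ t, w i * z i e := by
      intro e
      rw [← hyc]
      rw [Finset.sum_apply]
      simp
    have hz' : ∀ i : ι, ∃ Fi : Finset (Sym2 V), i ∈ t →
        ((Fi : Set (Sym2 V)) ⊆ G.edgeSet ∧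
          (fromEdgeSet (Fi : Set (Sym2 V))).IsAcyclic ∧
          z i = fun e => if e ∈ Fi then 1 else 0) := by
      intro i
      by_cases hi : i ∈ t
      · obtain ⟨Fi, h⟩ := hz i hi
        exact ⟨Fi, fun _ => h⟩
      · exact ⟨∅, fun h => absurd h hi⟩
    choose F hF using hz'
    have hzval : ∀ i ∈ t, ∀ e, z i e = if e ∈ F i then 1 else 0 := by
      intro i hi e
      rw [(hF i hi).2.2]
    have hz0 : ∀ i ∈ t, ∀ e, 0 ≤ z i e := by
      intro i hi e
      rw [hzval i hi e]
      split <;> norm_num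
    have hy0 : ∀ e, 0 ≤ y e := by
      intro e
      rw [hye]
      exact Finset.sum_nonneg fun i hi => mul_nonneg (hw0 i hi) (hz0 i hi e)
    -- C is nonempty
    have hCne : C.Nonempty := by
      by_contra hc
      rw [Set.not_nonempty_iff_eq_empty] at hc
      subst hc
      have h0 : ∑ v, (fun v => if v ∈ (∅ : Set V) then (1:ℝ) else 0) v = 0 := by
        simp
      rw [h0] at hy_sum
      have : (0:ℝ) ≤ ∑ e ∈ G.edgeFinset, y e :=
        Finset.sum_nonneg fun e _ => hy0 e
      linarith
    haveI : Nonempty ↥C := hCne.to_subtype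
    set n := C.toFinset.card with hn
    have hn1 : 1 ≤ n := by
      rw [hn]
      exact Finset.card_pos.2 (Set.toFinset_nonempty.2 hCne)
    -- y vanishes on edges with an endpoint outside C
    have hzero : ∀ u v : V, G.Adj u v → u ∉ C → y s(u, v) = 0 := by
      intro u v huv hu
      have h2 := (hy_le u v huv).1
      simp only [hu, if_false] at h2
      exact le_antisymm h2 (hy0 _)
    -- edges of forests with positive weight lie within C
    have hmemC : ∀ i ∈ t, w i ≠ 0 → ∀ e ∈ F i, ∀ u ∈ e, u ∈ C := by
      intro i hi hwi e he u hu
      by_contra huC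
      obtain ⟨v, rfl⟩ := Sym2.mem_iff_exists.1 hu
      have hadj : G.Adj u v := (hF i hi).1 he
      have h0 : y s(u, v) = 0 := hzero u v hadj huC
      rw [hye] at h0
      have := (Finset.sum_eq_zero_iff_of_nonneg
        (fun j hj => mul_nonneg (hw0 j hj) (hz0 j hj s(u, v)))).1 h0 i hi
      rw [hzval i hi, if_pos he] at this
      simp only [mul_one] at this
      exact hwi this
    -- each forest with positive weight has at most n - 1 edges
    have hcard_le : ∀ i ∈ t, w i ≠ 0 → #(F i) + 1 ≤ n := by
      intro i hi hwi
      have hK := acyclic_comap (C := C) (hF i hi).2.1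
      have hcle := acyclic_ncard_le hK
      rw [ncard_comap_eq (hF i hi).1 (hmemC i hi hwi)] at hcle
      rw [hn, Set.toFinset_card]
      exact hcle
    -- compute the total sum
    have hFsubE : ∀ i ∈ t, F i ⊆ G.edgeFinset := by
      intro i hi e he
      rw [mem_edgeFinset]
      exact (hF i hi).1 he
    have hsum_i : ∀ i ∈ t, ∑ e ∈ G.edgeFinset, z i e = (#(F i) : ℝ) := by
      intro i hi
      calc ∑ e ∈ G.edgeFinset, z i e
          = ∑ e ∈ G.edgeFinset, if e ∈ F i then (1:ℝ) else 0 :=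
            Finset.sum_congr rfl (fun e _ => hzval i hi e)
        _ = (#(F i) : ℝ) := by
            rw [Finset.sum_boole, Finset.filter_mem_eq_inter,
              Finset.inter_eq_right.2 (hFsubE i hi)]
    have hy_sum' : ∑ e ∈ G.edgeFinset, y e = (n : ℝ) - 1 := by
      rw [hy_sum, hsumx, hn]
    have htotal : ∑ i ∈ t, w i * (#(F i) : ℝ) = (n : ℝ) - 1 := by
      have hc : ∑ e ∈ G.edgeFinset, y e = ∑ i ∈ t, w i * (#(F i) : ℝ) := calc
        ∑ e ∈ G.edgeFinset, y e
          = ∑ e ∈ G.edgeFinset, ∑ i ∈ t, w i * z i e :=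
            Finset.sum_congr rfl fun e _ => hye e
        _ = ∑ i ∈ t, ∑ e ∈ G.edgeFinset, w i * z i e := Finset.sum_comm
        _ = ∑ i ∈ t, w i * ∑ e ∈ G.edgeFinset, z i e := by
            exact Finset.sum_congr rfl fun i _ => (Finset.mul_sum _ _ _).symm
        _ = ∑ i ∈ t, w i * (#(F i) : ℝ) :=
            Finset.sum_congr rfl fun i hi => by rw [hsum_i i hi]
      rw [← hc]
      exact hy_sum'
    have hterm : ∀ i ∈ t, 0 ≤ w i * ((n : ℝ) - 1 - (#(F i) : ℝ)) := by
      intro i hi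
      rcases eq_or_ne (w i) 0 with h | h
      · rw [h, zero_mul]
      · have h2 := hcard_le i hi h
        have h3 : (#(F i) : ℝ) + 1 ≤ (n : ℝ) := by exact_mod_cast h2
        exact mul_nonneg (hw0 i hi) (by linarith)
    have hzero_sum : ∑ i ∈ t, w i * ((n : ℝ) - 1 - (#(F i) : ℝ)) = 0 := by
      have e1 : ∑ i ∈ t, w i * ((n : ℝ) - 1) = (n : ℝ) - 1 := by
        rw [← Finset.sum_mul, hw1, one_mul]
      calc ∑ i ∈ t, w i * ((n : ℝ) - 1 - (#(F i) : ℝ))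
          = ∑ i ∈ t, (w i * ((n : ℝ) - 1) - w i * (#(F i) : ℝ)) :=
            Finset.sum_congr rfl fun i _ => by ring
        _ = (∑ i ∈ t, w i * ((n : ℝ) - 1)) - ∑ i ∈ t, w i * (#(F i) : ℝ) :=
            Finset.sum_sub_distrib _ _
        _ = 0 := by rw [e1, htotal]; ring
    have hex : ∃ i ∈ t, w i ≠ 0 := by
      by_contra h
      push_neg at h
      rw [Finset.sum_eq_zero h] at hw1
      norm_num at hw1
    obtain ⟨i, hi, hwi⟩ := hex
    have hterm0 := (Finset.sum_eq_zero_iff_of_nonneg hterm).1 hzero_sum i hi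
    have hFi : (#(F i) : ℝ) = (n : ℝ) - 1 := by
      rcases mul_eq_zero.1 hterm0 with h | h
      · exact absurd h hwi
      · linarith
    have hFn : #(F i) + 1 = n := by
      have : (#(F i) : ℝ) + 1 = (n : ℝ) := by linarith
      exact_mod_cast this
    have hKacyc := acyclic_comap (C := C) (hF i hi).2.1
    have hKcard : (SimpleGraph.comap (fun a : C => (a : V))
        (fromEdgeSet ↑(F i))).edgeSet.ncard + 1 = Fintype.card ↥C := by
      rw [ncard_comap_eq (hF i hi).1 (hmemC i hi hwi), ← Set.toFinset_card, ← hn]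
      exact hFn
    have hKconn := acyclic_connected_of_ncard hKacyc hKcard
    refine hKconn.mono ?_
    intro a b hab
    have hab' := hab
    rw [comap_adj, fromEdgeSet_adj] at hab'
    have : G.Adj (a : V) (b : V) := (hF i hi).1 hab'.1
    exact this
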